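/- Suppose all weights are equal to 1 (W_{kl} = 1 for all l > k) and γ, μ > 0. Fix (i,j), let Θ⋆_ij ∈ ℝ^K have at least one nonzero entry, let S = {k : Θ⋆_{k;ij} ≠ 0}, and let F be the adjugate matrix of B_{S_B:}ᵀ B_{S_B:}. Then for every index u ∈ {1,…,K} with Θ⋆_{u;ij} = 0: F_{uk} = det(B_{S_B:}ᵀ B_{S_B:})/|S| for every k ≠ u, and F_{uu} = (1 + γ²/μ²)·det(B_{S_B:}ᵀ B_{S_B:}) / (|S|·γ²/μ²). -/

import Mathlib

open scoped Classical
open Matrix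

/-- The Moore–Penrose pseudoinverse of a real matrix, characterized by the four Penrose
conditions (which determine it uniquely; it always exists for real matrices). -/
noncomputable def moorePenrose {m n : Type*} [Fintype m] [Fintype n]
    (B : Matrix m n ℝ) : Matrix n m ℝ :=
  if h : ∃ X : Matrix n m ℝ,
      B * X * B = B ∧ X * B * X = X ∧ (B * X)ᵀ = B * X ∧ (X * B)ᵀ = X * B then
    h.choose
  else 0

/-- The matrix `B = [(γ/μ)GA ; I_K]` for `q = 1`. -/
noncomputable def Bmat (K : ℕ) (W : Fin K → Fin K → ℝ) (γ μ : ℝ) :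
    Matrix ({p : Fin K × Fin K // p.1 < p.2} ⊕ Fin K) (Fin K) ℝ :=
  Matrix.of fun r c =>
    match r with
    | Sum.inl p => γ / μ * (W p.val.1 p.val.2 *
        (if c = p.val.1 then 1 else if c = p.val.2 then -1 else 0))
    | Sum.inr k => if c = k then 1 else 0

/-- The support `S_B` of `BΘ⋆`. -/
noncomputable def suppB (K : ℕ) (W : Fin K → Fin K → ℝ) (γ μ : ℝ) (Θ : Fin K → ℝ) :
    Finset ({p : Fin K × Fin K // p.1 < p.2} ⊕ Fin K) :=
  Finset.univ.filter fun r => ((Bmat K W γ μ) *ᵥ Θ) r ≠ 0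

/-- The submatrix `B_{S_B:}` of rows of `B` indexed by `S_B`. -/
noncomputable def BmatS (K : ℕ) (W : Fin K → Fin K → ℝ) (γ μ : ℝ) (Θ : Fin K → ℝ) :
    Matrix {x // x ∈ suppB K W γ μ Θ} (Fin K) ℝ :=
  (Bmat K W γ μ).submatrix Subtype.val id

/-- The sign vector `sign((BΘ⋆)_{S_B})`. -/
noncomputable def signBS (K : ℕ) (W : Fin K → Fin K → ℝ) (γ μ : ℝ) (Θ : Fin K → ℝ) :
    {x // x ∈ suppB K W γ μ Θ} → ℝ :=
  fun r => Real.sign (((Bmat K W γ μ) *ᵥ Θ) r.val)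

lemma Bmat_mulVec_inr (K : ℕ) (W : Fin K → Fin K → ℝ) (γ μ : ℝ) (y : Fin K → ℝ)
    (k : Fin K) : ((Bmat K W γ μ) *ᵥ y) (Sum.inr k) = y k := by
  simp [Bmat, Matrix.mulVec, dotProduct]

lemma Bmat_mulVec_inl (K : ℕ) (W : Fin K → Fin K → ℝ) (γ μ : ℝ)
    (hWone : ∀ k l : Fin K, k < l → W k l = 1) (y : Fin K → ℝ)
    (p : {p : Fin K × Fin K // p.1 < p.2}) :
    ((Bmat K W γ μ) *ᵥ y) (Sum.inl p) = γ / μ * (y p.val.1 - y p.val.2) := by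
  have hne : p.val.1 ≠ p.val.2 := ne_of_lt p.prop
  have hW := hWone p.val.1 p.val.2 p.prop
  simp only [Bmat, Matrix.mulVec, dotProduct, Matrix.of_apply, hW, one_mul]
  have : ∀ c : Fin K, γ / μ * (if c = p.val.1 then (1:ℝ) else if c = p.val.2 then -1 else 0) * y c
      = (if c = p.val.1 then γ / μ * y p.val.1 else 0) + (if c = p.val.2 then -(γ / μ) * y p.val.2 else 0) := by
    intro c
    by_cases h1 : c = p.val.1
    · subst h1; simp [hne]
    · by_cases h2 : c = p.val.2
      · subst h2; simp [hne.symm]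
      · simp [h1, h2]
  rw [Finset.sum_congr rfl (fun c _ => this c), Finset.sum_add_distrib]
  simp; ring


/-- double sum of a left Kronecker delta -/
lemma sum_delta_left {K : ℕ} (u : Fin K) (c : Fin K → ℝ) :
    (∑ k : Fin K, ∑ l : Fin K, (if k = u then c l else 0)) = ∑ l : Fin K, c l := by
  rw [Finset.sum_comm]
  simp [Finset.sum_ite_eq']

/-- double sum of a right Kronecker delta -/
lemma sum_delta_right {K : ℕ} (u : Fin K) (d : Fin K → ℝ) :
    (∑ k : Fin K, ∑ l : Fin K, (if l = u then d k else 0)) = ∑ k : Fin K, d k := by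
  simp [Finset.sum_ite_eq']

/-- double sum of a double Kronecker delta -/
lemma sum_delta_both {K : ℕ} (u v : Fin K) (c : ℝ) :
    (∑ k : Fin K, ∑ l : Fin K, (if k = u then if l = v then c else 0 else 0)) = c := by
  simp [Finset.sum_ite_eq']

/-- pointwise identity for the pair-block summand in the row `v = u`. -/
lemma point1 {K : ℕ} (s γ μ : ℝ) (hs : s ≠ 0) (hμ0 : μ ≠ 0) (hγ0 : γ ≠ 0)
    (Θ : Fin K → ℝ) (u : Fin K) (hu : Θ u = 0) (x : Fin K → ℝ)
    (hxu : x u = 1 / s + μ ^ 2 / (s * γ ^ 2)) (hxne : ∀ k, k ≠ u → x k = 1 / s)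
    (k l : Fin K) :
    (if k < l then (if Θ k ≠ Θ l
        then (γ / μ * (if u = k then (1:ℝ) else if u = l then -1 else 0)) * (γ / μ * (x k - x l))
        else 0) else 0)
    = (if k = u then (if u < l ∧ Θ l ≠ 0 then 1 / s else 0) else 0)
      + (if l = u then (if k < u ∧ Θ k ≠ 0 then 1 / s else 0) else 0) := by
  have hval : γ / μ * (γ / μ * (μ ^ 2 / (s * γ ^ 2))) = 1 / s := by
    field_simp
  by_cases hk : k = u
  · subst hk
    by_cases hl : l = k
    · subst hl; simp [lt_irrefl]
    · rw [if_pos rfl, if_neg hl, add_zero]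
      by_cases hkl : k < l
      · rw [if_pos hkl]
        have hx1 : x k - x l = μ ^ 2 / (s * γ ^ 2) := by
          rw [hxu, hxne l hl]; ring
        rw [hx1, if_pos rfl, hu]
        by_cases hΘl : Θ l ≠ 0
        · rw [if_pos (fun h => hΘl h.symm), if_pos (show k < l ∧ Θ l ≠ 0 from ⟨hkl, hΘl⟩),
            ← hval]
          ring
        · rw [if_neg (fun h => hΘl (Ne.symm h)),
            if_neg (fun h : k < l ∧ Θ l ≠ 0 => hΘl h.2)]
      · rw [if_neg hkl, if_neg (fun h : k < l ∧ Θ l ≠ 0 => hkl h.1)]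
        simp only [ite_self]
  · by_cases hl : l = u
    · subst hl
      rw [if_neg hk, if_pos rfl, zero_add]
      by_cases hkl : k < l
      · rw [if_pos hkl]
        have hx1 : x k - x l = -(μ ^ 2 / (s * γ ^ 2)) := by
          rw [hxu, hxne k hk]; ring
        have hlk : ¬ (l = k) := fun h => hk h.symm
        rw [hx1, if_neg hlk, if_pos rfl, hu]
        by_cases hΘk : Θ k ≠ 0
        · rw [if_pos hΘk, if_pos (show k < l ∧ Θ k ≠ 0 from ⟨hkl, hΘk⟩), ← hval]
          ring
        · rw [if_neg hΘk, if_neg (fun h : k < l ∧ Θ k ≠ 0 => hΘk h.2)]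
      · rw [if_neg hkl, if_neg (fun h : k < l ∧ Θ k ≠ 0 => hkl h.1)]
        simp only [ite_self]
    · rw [if_neg hk, if_neg hl, add_zero]
      by_cases hkl : k < l
      · rw [if_pos hkl]
        have hx1 : x k - x l = 0 := by rw [hxne k hk, hxne l hl]; ring
        rw [hx1]
        split_ifs <;> ring
      · rw [if_neg hkl]

/-- pointwise identity for the pair-block summand in a row `v ≠ u`. -/
lemma point2 {K : ℕ} (s γ μ : ℝ) (hs : s ≠ 0) (hμ0 : μ ≠ 0) (hγ0 : γ ≠ 0)
    (Θ : Fin K → ℝ) (u v : Fin K) (hu : Θ u = 0) (hvu : v ≠ u) (x : Fin K → ℝ)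
    (hxu : x u = 1 / s + μ ^ 2 / (s * γ ^ 2)) (hxne : ∀ k, k ≠ u → x k = 1 / s)
    (k l : Fin K) :
    (if k < l then (if Θ k ≠ Θ l
        then (γ / μ * (if v = k then (1:ℝ) else if v = l then -1 else 0)) * (γ / μ * (x k - x l))
        else 0) else 0)
    = (if k = u then (if l = v then (if u < v ∧ Θ v ≠ 0 then -(1 / s) else 0) else 0) else 0)
      + (if k = v then (if l = u then (if v < u ∧ Θ v ≠ 0 then -(1 / s) else 0) else 0) else 0) := by
  have hval : γ / μ * (γ / μ * (μ ^ 2 / (s * γ ^ 2))) = 1 / s := by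
    field_simp
  by_cases hk : k = u
  · subst hk
    have hkv : ¬ (k = v) := fun h => hvu h.symm
    rw [if_pos rfl, if_neg hkv, add_zero]
    by_cases hl : l = v
    · subst hl
      rw [if_pos rfl]
      by_cases hkl : k < l
      · rw [if_pos hkl]
        have hx1 : x k - x l = μ ^ 2 / (s * γ ^ 2) := by
          rw [hxu, hxne l hvu]; ring
        have hlk : ¬ (l = k) := ne_of_gt hkl
        rw [hx1, if_neg hlk, if_pos rfl, hu]
        by_cases hΘv : Θ l ≠ 0
        · rw [if_pos (fun h => hΘv h.symm), if_pos (show k < l ∧ Θ l ≠ 0 from ⟨hkl, hΘv⟩),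
            ← hval]
          ring
        · rw [if_neg (fun h => hΘv (Ne.symm h)),
            if_neg (fun h : k < l ∧ Θ l ≠ 0 => hΘv h.2)]
      · rw [if_neg hkl, if_neg (fun h : k < l ∧ Θ l ≠ 0 => hkl h.1)]
        simp only [ite_self]
    · rw [if_neg hl]
      by_cases hkl : k < l
      · rw [if_pos hkl]
        have hlk : ¬ (l = k) := ne_of_gt hkl
        have hvk : ¬ (v = k) := hvu
        have hvl : ¬ (v = l) := fun h => hl h.symm
        rw [if_neg hvk, if_neg hvl]
        split_ifs <;> ring
      · rw [if_neg hkl]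
  · by_cases hl : l = u
    · subst hl
      have hlv : ¬ (l = v) := fun h => hvu h.symm
      rw [if_neg hk, zero_add]
      by_cases hkv : k = v
      · subst hkv
        rw [if_pos rfl, if_pos rfl]
        by_cases hkl : k < l
        · rw [if_pos hkl]
          have hx1 : x k - x l = -(μ ^ 2 / (s * γ ^ 2)) := by
            rw [hxu, hxne k hk]; ring
          rw [hx1, if_pos rfl, hu]
          by_cases hΘv : Θ k ≠ 0
          · rw [if_pos hΘv, if_pos (show k < l ∧ Θ k ≠ 0 from ⟨hkl, hΘv⟩), ← hval]
            ring
          · rw [if_neg hΘv, if_neg (fun h : k < l ∧ Θ k ≠ 0 => hΘv h.2)]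
        · rw [if_neg hkl, if_neg (fun h : k < l ∧ Θ k ≠ 0 => hkl h.1)]
          simp only [ite_self]
      · rw [if_neg hkv]
        by_cases hkl : k < l
        · rw [if_pos hkl]
          have hvk : ¬ (v = k) := fun h => hkv h.symm
          have hvl : ¬ (v = l) := hvu
          rw [if_neg hvk, if_neg hvl]
          split_ifs <;> ring
        · rw [if_neg hkl]
    · -- neither k nor l is u : x k - x l = 0
      rw [if_neg hk, zero_add]
      have hz : (if k = v then (if l = u then (if v < u ∧ Θ v ≠ 0 then -(1 / s) else 0) else 0) else 0) = 0 := by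
        rw [show (if l = u then (if v < u ∧ Θ v ≠ 0 then -(1 / s) else 0) else 0) = 0 from if_neg hl]
        split_ifs <;> rfl
      rw [hz]
      by_cases hkl : k < l
      · rw [if_pos hkl]
        have hx1 : x k - x l = 0 := by rw [hxne k hk, hxne l hl]; ring
        rw [hx1]
        split_ifs <;> ring
      · rw [if_neg hkl]

/-- the support count splits across `u`. -/
lemma count_split {K : ℕ} (s : ℝ) (Θ : Fin K → ℝ) (u : Fin K) (hu : Θ u = 0) :
    (∑ l : Fin K, (if u < l ∧ Θ l ≠ 0 then 1 / s else 0))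
      + (∑ k : Fin K, (if k < u ∧ Θ k ≠ 0 then 1 / s else 0))
    = ((Finset.univ.filter (fun k => Θ k ≠ 0)).card : ℝ) * (1 / s) := by
  rw [← Finset.sum_add_distrib]
  have h : ∀ l : Fin K, (if u < l ∧ Θ l ≠ 0 then 1 / s else 0)
      + (if l < u ∧ Θ l ≠ 0 then 1 / s else 0) = if Θ l ≠ 0 then 1 / s else 0 := by
    intro l
    by_cases hl : l = u
    · subst hl; simp [hu, lt_irrefl]
    · rcases lt_or_gt_of_ne hl with h1 | h1
      · by_cases hΘ : Θ l ≠ 0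
        · rw [if_neg (fun h => absurd h.1 (not_lt_of_gt h1)), if_pos ⟨h1, hΘ⟩, if_pos hΘ, zero_add]
        · rw [if_neg (fun h => hΘ h.2), if_neg (fun h => hΘ h.2), if_neg hΘ, zero_add]
      · by_cases hΘ : Θ l ≠ 0
        · rw [if_pos ⟨h1, hΘ⟩, if_neg (fun h => absurd h.1 (not_lt_of_gt h1)), if_pos hΘ, add_zero]
        · rw [if_neg (fun h => hΘ h.2), if_neg (fun h => hΘ h.2), if_neg hΘ, add_zero]
  rw [Finset.sum_congr rfl (fun l _ => h l), ← Finset.sum_filter, Finset.sum_const,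
    nsmul_eq_mul]

set_option maxHeartbeats 2000000 in
/-- The key computation: `(BᵀB) x = e_u` for the magic vector `x`. -/
lemma key_mulVec (K : ℕ) (W : Fin K → Fin K → ℝ)
    (hWone : ∀ k l : Fin K, k < l → W k l = 1)
    (μ γ : ℝ) (hμ : 0 < μ) (hγ : 0 < γ)
    (Θ : Fin K → ℝ) (hΘ : ∃ k, Θ k ≠ 0) (u : Fin K) (hu : Θ u = 0) :
    (((BmatS K W γ μ Θ)ᵀ * BmatS K W γ μ Θ) *ᵥ
      (fun k => if k = u
        then 1 / ((Finset.univ.filter (fun k => Θ k ≠ 0)).card : ℝ)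
              + μ ^ 2 / (((Finset.univ.filter (fun k => Θ k ≠ 0)).card : ℝ) * γ ^ 2)
        else 1 / ((Finset.univ.filter (fun k => Θ k ≠ 0)).card : ℝ)))
    = fun v => if v = u then 1 else 0 := by
  have hμ0 : μ ≠ 0 := ne_of_gt hμ
  have hγ0 : γ ≠ 0 := ne_of_gt hγ
  set s : ℝ := ((Finset.univ.filter (fun k => Θ k ≠ 0)).card : ℝ) with hsdef
  have hcard : 0 < (Finset.univ.filter (fun k => Θ k ≠ 0)).card := by
    obtain ⟨k, hk⟩ := hΘ
    exact Finset.card_pos.2 ⟨k, by simp [hk]⟩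
  have hs : s ≠ 0 := by
    rw [hsdef]; exact_mod_cast hcard.ne'
  set x : Fin K → ℝ := fun k => if k = u then 1 / s + μ ^ 2 / (s * γ ^ 2) else 1 / s with hxdef
  have hxu : x u = 1 / s + μ ^ 2 / (s * γ ^ 2) := by rw [hxdef]; simp
  have hxne : ∀ k, k ≠ u → x k = 1 / s := by intro k hk; rw [hxdef]; simp [hk]
  funext v
  have e1 : ((((BmatS K W γ μ Θ)ᵀ * BmatS K W γ μ Θ)) *ᵥ x) v
      = ∑ r : {r // r ∈ suppB K W γ μ Θ},
          Bmat K W γ μ r.val v * ((Bmat K W γ μ) *ᵥ x) r.val := by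
    rw [← Matrix.mulVec_mulVec]
    simp only [Matrix.mulVec, dotProduct, Matrix.transpose_apply, BmatS,
      Matrix.submatrix_apply, id]
  rw [e1]
  rw [Finset.sum_coe_sort (suppB K W γ μ Θ)
    (fun r => Bmat K W γ μ r v * ((Bmat K W γ μ) *ᵥ x) r)]
  rw [suppB, Finset.sum_filter, Fintype.sum_sum_type]
  -- the identity-block sum
  have e2 : ∀ k : Fin K,
      (if ((Bmat K W γ μ) *ᵥ Θ) (Sum.inr k) ≠ 0
        then Bmat K W γ μ (Sum.inr k) v * ((Bmat K W γ μ) *ᵥ x) (Sum.inr k) else 0)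
      = if k = v then (if Θ v ≠ 0 then x v else 0) else 0 := by
    intro k
    rw [Bmat_mulVec_inr, Bmat_mulVec_inr]
    by_cases hkv : k = v
    · subst hkv; simp [Bmat]
    · simp [Bmat, hkv, Ne.symm hkv]
  rw [Finset.sum_congr rfl (fun k _ => e2 k), Finset.sum_ite_eq' Finset.univ v, if_pos (Finset.mem_univ v)]
  -- the pair-block sum
  set g : Fin K → Fin K → ℝ := fun k l =>
    if Θ k ≠ Θ l
      then (γ / μ * (if v = k then 1 else if v = l then -1 else 0)) * (γ / μ * (x k - x l))
      else 0 with hgdef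
  have e3 : ∀ p : {p : Fin K × Fin K // p.1 < p.2},
      (if ((Bmat K W γ μ) *ᵥ Θ) (Sum.inl p) ≠ 0
        then Bmat K W γ μ (Sum.inl p) v * ((Bmat K W γ μ) *ᵥ x) (Sum.inl p) else 0)
      = g p.val.1 p.val.2 := by
    intro p
    have hW := hWone p.val.1 p.val.2 p.prop
    have hc : γ / μ ≠ 0 := div_ne_zero hγ0 hμ0
    rw [Bmat_mulVec_inl K W γ μ hWone, Bmat_mulVec_inl K W γ μ hWone]
    have hcond : (γ / μ * (Θ p.val.1 - Θ p.val.2) ≠ 0) ↔ (Θ p.val.1 ≠ Θ p.val.2) := by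
      rw [mul_ne_zero_iff, sub_ne_zero]; simp [hc]
    rw [hgdef]
    simp only [Bmat, Matrix.of_apply, hW, one_mul]
    by_cases h : Θ p.val.1 ≠ Θ p.val.2
    · rw [if_pos (hcond.2 h), if_pos h]
    · rw [if_neg (fun hh => h (hcond.1 hh)), if_neg h]
  rw [Finset.sum_congr rfl (fun p _ => e3 p)]
  have e4 : (∑ p : {p : Fin K × Fin K // p.1 < p.2}, g p.val.1 p.val.2)
      = ∑ k : Fin K, ∑ l : Fin K, if k < l then g k l else 0 := by
    rw [← Finset.sum_subtype (Finset.univ.filter (fun q : Fin K × Fin K => q.1 < q.2))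
      (by simp) (fun q => g q.1 q.2)]
    rw [Finset.sum_filter, Fintype.sum_prod_type]
  rw [e4]
  by_cases hv : v = u
  · subst hv
    rw [if_pos rfl]
    have hpair : ∀ k l : Fin K, (if k < l then g k l else 0)
        = (if k = v then (if v < l ∧ Θ l ≠ 0 then 1 / s else 0) else 0)
          + (if l = v then (if k < v ∧ Θ k ≠ 0 then 1 / s else 0) else 0) := by
      intro k l
      simp only [hgdef]
      exact point1 s γ μ hs hμ0 hγ0 Θ v hu x hxu hxne k l
    rw [Finset.sum_congr rfl (fun k _ => Finset.sum_congr rfl (fun l _ => hpair k l))]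
    simp only [Finset.sum_add_distrib]
    rw [sum_delta_left v (fun l => if v < l ∧ Θ l ≠ 0 then 1 / s else 0),
      sum_delta_right v (fun k => if k < v ∧ Θ k ≠ 0 then 1 / s else 0),
      count_split s Θ v hu, if_neg (fun h => h hu), add_zero, ← hsdef,
      mul_one_div, div_self hs]
  · rw [if_neg hv]
    have hpair : ∀ k l : Fin K, (if k < l then g k l else 0)
        = (if k = u then (if l = v then (if u < v ∧ Θ v ≠ 0 then -(1 / s) else 0) else 0) else 0)
          + (if k = v then (if l = u then (if v < u ∧ Θ v ≠ 0 then -(1 / s) else 0) else 0) else 0) := by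
      intro k l
      simp only [hgdef]
      exact point2 s γ μ hs hμ0 hγ0 Θ u v hu hv x hxu hxne k l
    rw [Finset.sum_congr rfl (fun k _ => Finset.sum_congr rfl (fun l _ => hpair k l))]
    simp only [Finset.sum_add_distrib]
    rw [sum_delta_both u v (if u < v ∧ Θ v ≠ 0 then -(1 / s) else 0),
      sum_delta_both v u (if v < u ∧ Θ v ≠ 0 then -(1 / s) else 0),
      hxne v hv]
    by_cases hΘv : Θ v ≠ 0
    · rw [if_pos hΘv]
      rcases lt_trichotomy u v with h1 | h1 | h1
      · rw [if_pos (show u < v ∧ Θ v ≠ 0 from ⟨h1, hΘv⟩),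
          if_neg (fun h : v < u ∧ Θ v ≠ 0 => absurd h.1 (asymm h1))]
        ring
      · exact absurd h1.symm hv
      · rw [if_neg (fun h : u < v ∧ Θ v ≠ 0 => absurd h.1 (asymm h1)),
          if_pos (show v < u ∧ Θ v ≠ 0 from ⟨h1, hΘv⟩)]
        ring
    · rw [if_neg hΘv, if_neg (fun h : u < v ∧ Θ v ≠ 0 => hΘv h.2),
        if_neg (fun h : v < u ∧ Θ v ≠ 0 => hΘv h.2)]
      ring

/-- with all weights equal to 1 and `γ, μ > 0`, let `F` be the adjugate of
`B_{S_B:}ᵀB_{S_B:}` and `S = supp Θ⋆`. Then for every `u` with `Θ⋆_u = 0`: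
`F_{uk} = det(B_{S_B:}ᵀB_{S_B:})/|S|` for `k ≠ u`, and
`F_{uu} = (1 + γ²/μ²)·det(B_{S_B:}ᵀB_{S_B:})/(|S|·γ²/μ²)`. -/
theorem adjugate_entries_zero_row
    (K : ℕ) (W : Fin K → Fin K → ℝ)
    (hWone : ∀ k l : Fin K, k < l → W k l = 1)
    (μ γ : ℝ) (hμ : 0 < μ) (hγ : 0 < γ)
    (Θ : Fin K → ℝ) (hΘ : ∃ k, Θ k ≠ 0) :
    ∀ u : Fin K, Θ u = 0 →
      (∀ k : Fin K, k ≠ u →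
        (Matrix.adjugate ((BmatS K W γ μ Θ)ᵀ * BmatS K W γ μ Θ)) u k =
          ((BmatS K W γ μ Θ)ᵀ * BmatS K W γ μ Θ).det /
            ((Finset.univ.filter (fun k => Θ k ≠ 0)).card : ℝ)) ∧
      (Matrix.adjugate ((BmatS K W γ μ Θ)ᵀ * BmatS K W γ μ Θ)) u u =
        (1 + γ ^ 2 / μ ^ 2) * ((BmatS K W γ μ Θ)ᵀ * BmatS K W γ μ Θ).det /
          (((Finset.univ.filter (fun k => Θ k ≠ 0)).card : ℝ) * (γ ^ 2 / μ ^ 2)) := by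
  intro u hu
  have hμ0 : μ ≠ 0 := ne_of_gt hμ
  have hγ0 : γ ≠ 0 := ne_of_gt hγ
  set M := (BmatS K W γ μ Θ)ᵀ * BmatS K W γ μ Θ with hM
  set s : ℝ := ((Finset.univ.filter (fun k => Θ k ≠ 0)).card : ℝ) with hsdef
  have hcard : 0 < (Finset.univ.filter (fun k => Θ k ≠ 0)).card := by
    obtain ⟨k, hk⟩ := hΘ
    exact Finset.card_pos.2 ⟨k, by simp [hk]⟩
  have hs : s ≠ 0 := by
    rw [hsdef]; exact_mod_cast hcard.ne'
  set x : Fin K → ℝ := fun k => if k = u then 1 / s + μ ^ 2 / (s * γ ^ 2) else 1 / s with hxdef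
  have hkey : M *ᵥ x = fun v => if v = u then 1 else 0 :=
    key_mulVec K W hWone μ γ hμ hγ Θ hΘ u hu
  have h1 : Matrix.adjugate M *ᵥ (M *ᵥ x) = M.det • x := by
    rw [Matrix.mulVec_mulVec, Matrix.adjugate_mul, Matrix.smul_mulVec,
      Matrix.one_mulVec]
  rw [hkey] at h1
  have h2 : ∀ k : Fin K, Matrix.adjugate M k u = M.det * x k := by
    intro k
    have hc := congrFun h1 k
    simpa [Matrix.mulVec, dotProduct, mul_ite, mul_one, mul_zero,
      Finset.sum_ite_eq'] using hc
  have hsymm : Mᵀ = M := by rw [hM, Matrix.transpose_mul, Matrix.transpose_transpose]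
  have h3 : ∀ k : Fin K, Matrix.adjugate M u k = M.det * x k := by
    intro k
    rw [show Matrix.adjugate M u k = (Matrix.adjugate M)ᵀ k u from rfl,
      Matrix.adjugate_transpose, hsymm]
    exact h2 k
  constructor
  · intro k hk
    rw [h3 k, hxdef]
    simp only [if_neg hk]
    rw [mul_one_div]
  · rw [h3 u, hxdef]
    simp only [if_pos rfl, if_true]
    field_simp
    ring
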